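/- arXiv:1902.06275 — 2 statements merged into one kernel-verified Lean document; each statement's English description precedes it below -/
import Mathlib

section
/- For every zero-error code C ⊆ S_q(n) for the (ℓ,r)-0-insertion channel, the map f is injective on C and its image satisfies f(C) ⊆ C_{q,ℓ,r}(n); in particular, f maps C bijectively onto a subcode of C_{q,ℓ,r}(n) of the same cardinality. -/
namespace ZeroErrorDup

/-- Output relation of the (ℓ,r)-0-insertion channel acting on strings over the
alphabet A_q = {0,1,…,q−1} (encoded as lists of naturals): after each input symbol,
`c` copies of the block `0^ℓ` are inserted, for some `c ∈ {0,1,…,r}`. -/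
inductive IsOutput (ℓ r : ℕ) : List ℕ → List ℕ → Prop
  | nil : IsOutput ℓ r [] []
  | cons (a : ℕ) (c : ℕ) (hc : c ≤ r) {x y : List ℕ} :
      IsOutput ℓ r x y → IsOutput ℓ r (a :: x) (a :: (List.replicate (c * ℓ) 0 ++ y))

/-- Two strings are confusable if some string is an output of both. -/
def Confusable (ℓ r : ℕ) (x y : List ℕ) : Prop :=
  ∃ z, IsOutput ℓ r x z ∧ IsOutput ℓ r y z

/-- A set of strings is a zero-error code if every two distinct elements are
non-confusable. -/
def ZeroErrorCode (ℓ r : ℕ) (C : Set (List ℕ)) : Prop :=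
  ∀ x ∈ C, ∀ y ∈ C, x ≠ y → ¬ Confusable ℓ r x y

/-- `L ℓ r i j = ((r i + 1)(r ℓ + 1)^j − 1)/r − 1` (the division is exact). -/
def L (ℓ r i j : ℕ) : ℕ := ((r * i + 1) * (r * ℓ + 1) ^ j - 1) / r - 1

/-- The block `σ 0^u`: the symbol `σ` followed by a run of `u` zeros. -/
def block (σ u : ℕ) : List ℕ := σ :: List.replicate u 0

/-- `B q ℓ r`: the set of blocks `σ 0^{L(i,j)}` with `σ ∈ {1,…,q−1}`, `1 ≤ i ≤ ℓ`, `j ≥ 0`. -/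
def B (q ℓ r : ℕ) : Set (List ℕ) :=
  { b | ∃ σ i j : ℕ, 1 ≤ σ ∧ σ ≤ q - 1 ∧ 1 ≤ i ∧ i ≤ ℓ ∧ b = block σ (L ℓ r i j) }

/-- `S q n`: strings over `A_q` of length between 1 and `n` whose first symbol is nonzero. -/
def S (q n : ℕ) : Set (List ℕ) :=
  { x | x ≠ [] ∧ x.length ≤ n ∧ (∀ a ∈ x, a < q) ∧ x.headI ≠ 0 }

/-- `C q ℓ r n`: strings in `S q n` that are concatenations of blocks from `B q ℓ r`. -/
def C (q ℓ r n : ℕ) : Set (List ℕ) :=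
  { x | x ∈ S q n ∧ ∃ bs : List (List ℕ), (∀ b ∈ bs, b ∈ B q ℓ r) ∧ x = bs.flatten }

/-- Reduced run length: the largest integer of the form `L ℓ r i j` (with `1 ≤ i ≤ ℓ`,
`j ≥ 0`) that is at most `u` and congruent to `u` modulo `ℓ` (such an integer always
exists). -/
noncomputable def g (ℓ r u : ℕ) : ℕ :=
  sSup { m | (∃ i j : ℕ, 1 ≤ i ∧ i ≤ ℓ ∧ m = L ℓ r i j) ∧ m ≤ u ∧ m % ℓ = u % ℓ }

/-- The map `f`, shortening each maximal run of zeros of length `u` to length `g ℓ r u`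
and leaving all nonzero symbols in place. -/
noncomputable def f (ℓ r : ℕ) (x : List ℕ) : List ℕ :=
  match h : x.dropWhile (· == 0) with
  | [] => List.replicate (g ℓ r (x.takeWhile (· == 0)).length) 0
  | a :: t =>
      List.replicate (g ℓ r (x.takeWhile (· == 0)).length) 0 ++ a :: f ℓ r t
termination_by x.length
decreasing_by
  have h1 : (x.dropWhile (· == 0)).length ≤ x.length :=
    (List.dropWhile_sublist _).length_le
  rw [h] at h1
  simp only [List.length_cons] at h1
  omega

lemma L_key (ℓ r i j : ℕ) (hr : 1 ≤ r) (hi : 1 ≤ i) :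
    r * (L ℓ r i j + 1) + 1 = (r * i + 1) * (r * ℓ + 1) ^ j := by
  set A := (r * i + 1) * (r * ℓ + 1) ^ j with hA
  have hA1 : 1 ≤ A := by
    have h1 : 1 ≤ (r * ℓ + 1) ^ j := Nat.one_le_pow _ _ (by omega)
    calc 1 ≤ (r*i+1) * 1 := by omega
      _ ≤ A := Nat.mul_le_mul_left _ h1
  have hme : A ≡ 1 [MOD r] := by
    have h1 : r * ℓ + 1 ≡ 0 + 1 [MOD r] :=
      Nat.ModEq.add_right 1 ((Nat.modEq_zero_iff_dvd).mpr ⟨ℓ, rfl⟩)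
    have h2 : r * i + 1 ≡ 0 + 1 [MOD r] :=
      Nat.ModEq.add_right 1 ((Nat.modEq_zero_iff_dvd).mpr ⟨i, rfl⟩)
    simpa using (h2.mul (h1.pow j))
  have hdvd : r ∣ A - 1 := (Nat.modEq_iff_dvd' hA1).mp hme.symm
  have hAge : r + 1 ≤ A := by
    have h1 : 1 ≤ (r * ℓ + 1) ^ j := Nat.one_le_pow _ _ (by omega)
    calc r + 1 ≤ (r*i+1) * 1 := by nlinarith
      _ ≤ A := Nat.mul_le_mul_left _ h1
  have hq : r * ((A - 1) / r) = A - 1 := Nat.mul_div_cancel' hdvd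
  have hq1 : 1 ≤ (A - 1) / r := by
    rw [Nat.le_div_iff_mul_le (by omega)]; omega
  show r * (((A - 1) / r - 1) + 1) + 1 = A
  rw [Nat.sub_add_cancel hq1]
  omega

lemma L_zero (ℓ r i : ℕ) (hr : 1 ≤ r) (hi : 1 ≤ i) : L ℓ r i 0 = i - 1 := by
  have h := L_key ℓ r i 0 hr hi
  simp only [pow_zero, mul_one] at h
  have : r * (L ℓ r i 0 + 1) = r * i := by omega
  have := Nat.eq_of_mul_eq_mul_left (show 0 < r by omega) this
  omega

lemma L_succ (ℓ r i j : ℕ) (hr : 1 ≤ r) (hi : 1 ≤ i) :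
    L ℓ r i (j + 1) + 1 = (L ℓ r i j + 1) * (r * ℓ + 1) + ℓ := by
  have h1 := L_key ℓ r i j hr hi
  have h2 := L_key ℓ r i (j+1) hr hi
  rw [pow_succ, ← mul_assoc, ← h1] at h2
  have h3 : r * (L ℓ r i (j+1) + 1) = r * ((L ℓ r i j + 1) * (r * ℓ + 1) + ℓ) := by
    ring_nf; ring_nf at h2; omega
  exact Nat.eq_of_mul_eq_mul_left (by omega) h3

lemma g_spec (ℓ r u : ℕ) (hℓ : 1 ≤ ℓ) (hr : 1 ≤ r) :
    (∃ i j : ℕ, 1 ≤ i ∧ i ≤ ℓ ∧ g ℓ r u = L ℓ r i j) ∧ g ℓ r u ≤ u ∧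
      g ℓ r u % ℓ = u % ℓ ∧ u < (g ℓ r u + 1) * (r * ℓ + 1) := by
  set T := { m | (∃ i j : ℕ, 1 ≤ i ∧ i ≤ ℓ ∧ m = L ℓ r i j) ∧ m ≤ u ∧ m % ℓ = u % ℓ } with hT
  have hne : (T).Nonempty := by
    refine ⟨u % ℓ, ⟨⟨u % ℓ + 1, 0, by omega, ?_, ?_⟩, Nat.mod_le _ _,
      Nat.mod_mod_of_dvd u dvd_rfl⟩⟩
    · have := Nat.mod_lt u (show 0 < ℓ by omega); omega
    · rw [L_zero ℓ r _ hr (by omega)]; omega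
  have hbdd : BddAbove T := ⟨u, fun m hm => hm.2.1⟩
  have hmem : g ℓ r u ∈ T := Nat.sSup_mem hne hbdd
  obtain ⟨⟨i, j, hi1, hi2, hL⟩, hle, hmod⟩ := hmem
  refine ⟨⟨i, j, hi1, hi2, hL⟩, hle, hmod, ?_⟩
  by_contra hcon
  push_neg at hcon
  set m := g ℓ r u with hm
  set m' := L ℓ r i (j+1) with hm'
  have hsucc : m' + 1 = (m + 1) * (r * ℓ + 1) + ℓ := by
    rw [hm', hL]; exact L_succ ℓ r i j hr hi1
  have hmod' : m' % ℓ = m % ℓ := by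
    have : m' = m + ((m + 1) * r + 1) * ℓ := by ring_nf; ring_nf at hsucc; omega
    rw [this, Nat.add_mul_mod_self_right]
  have he : m + 1 ≤ (m + 1) * (r * ℓ + 1) := Nat.le_mul_of_pos_right _ (by omega)
  have hm'le : m' ≤ u := by
    rcases le_or_gt m' u with h | h
    · exact h
    · exfalso
      have hd : ℓ ∣ m' - u := (Nat.modEq_iff_dvd' h.le).mp (by unfold Nat.ModEq; omega)
      have hlt : m' - u < ℓ := by omega
      have := Nat.eq_zero_of_dvd_of_lt hd hlt
      omega
  have hmem' : m' ∈ T := ⟨⟨i, j+1, hi1, hi2, rfl⟩, hm'le, by rw [hmod', hmod]⟩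
  have hle' := le_csSup hbdd hmem'
  have hsup : sSup T = m := rfl
  omega

lemma g_zero (ℓ r : ℕ) (hℓ : 1 ≤ ℓ) (hr : 1 ≤ r) : g ℓ r 0 = 0 :=
  Nat.le_zero.mp (g_spec ℓ r 0 hℓ hr).2.1

lemma run_gap (ℓ r u v : ℕ) (hℓ : 1 ≤ ℓ) (hr : 1 ≤ r)
    (hg : g ℓ r u = g ℓ r v) (huv : u ≤ v) :
    ∃ k, k ≤ (u + 1) * r ∧ v = u + k * ℓ := by
  obtain ⟨_, hu1, hu2, hu3⟩ := g_spec ℓ r u hℓ hr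
  obtain ⟨_, hv1, hv2, hv3⟩ := g_spec ℓ r v hℓ hr
  rw [hg] at hu1 hu2 hu3
  set m := g ℓ r v with hm
  have hd : ℓ ∣ v - u := (Nat.modEq_iff_dvd' huv).mp (by unfold Nat.ModEq; omega)
  obtain ⟨k, hk⟩ := hd
  refine ⟨k, ?_, by rw [mul_comm]; omega⟩
  have h1 : v ≤ (m + 1) * (r * ℓ) + m := by nlinarith
  have h2 : ℓ * k ≤ ℓ * ((m + 1) * r) := by
    have hrw : ℓ * ((m + 1) * r) = (m + 1) * (r * ℓ) := by ring
    omega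
  have h3 : k ≤ (m + 1) * r := Nat.le_of_mul_le_mul_left h2 (by omega)
  have h4 : (m + 1) * r ≤ (u + 1) * r := Nat.mul_le_mul_right _ (by omega)
  omega
lemma out_refl (ℓ r : ℕ) (x : List ℕ) : IsOutput ℓ r x x := by
  induction x with
  | nil => exact .nil
  | cons a t ih =>
    have := IsOutput.cons a 0 (Nat.zero_le r) ih
    simpa using this

lemma out_append {ℓ r : ℕ} {x y x' y' : List ℕ} (h : IsOutput ℓ r x y)
    (h' : IsOutput ℓ r x' y') : IsOutput ℓ r (x ++ x') (y ++ y') := by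
  induction h with
  | nil => simpa using h'
  | cons a c hc h ih =>
    have := IsOutput.cons a c hc ih
    simpa using this

lemma out_zero_run (ℓ r : ℕ) (u c : ℕ) (hc : c ≤ u * r) :
    IsOutput ℓ r (List.replicate u 0) (List.replicate (u + c * ℓ) 0) := by
  induction u generalizing c with
  | zero =>
    have : c = 0 := by simpa using hc
    subst this; simpa using IsOutput.nil
  | succ u ih =>
    have hm : min c r ≤ r := min_le_right _ _
    have hrest : c - min c r ≤ u * r := by
      rcases le_or_gt c r with h | h
      · simp [min_eq_left h]
      · rw [min_eq_right h.le]
        have : c ≤ u * r + r := by have := hc; ring_nf at this ⊢; omega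
        omega
    have h0 := IsOutput.cons 0 (min c r) hm (ih (c - min c r) hrest)
    have hmul : (min c r) * ℓ + (c - min c r) * ℓ = c * ℓ := by
      rw [← Nat.add_mul]; congr 1; omega
    have heq : (0 : ℕ) :: (List.replicate ((min c r) * ℓ) 0 ++
        List.replicate (u + (c - min c r) * ℓ) 0) = List.replicate (u + 1 + c * ℓ) 0 := by
      rw [List.eq_replicate_iff]
      constructor
      · simp; omega
      · intro b hb
        simp only [List.mem_cons, List.mem_append, List.mem_replicate] at hb
        rcases hb with h | h | h <;> omega
    rw [List.replicate_succ]
    exact heq ▸ h0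
lemma takeWhile_eq_rep (x : List ℕ) :
    x.takeWhile (· == 0) = List.replicate (x.takeWhile (· == 0)).length 0 := by
  rw [List.eq_replicate_iff]
  exact ⟨rfl, fun b hb => by simpa using List.mem_takeWhile_imp hb⟩

lemma dropWhile_head_ne (x : List ℕ) (a : ℕ) (t : List ℕ)
    (h : x.dropWhile (· == 0) = a :: t) : a ≠ 0 := by
  have h2 := List.head_dropWhile_not (· == 0) (l := x) (by simp [h])
  have h3 : (x.dropWhile (· == 0)).head (by simp [h]) = a := by
    simp [h]
  rw [h3] at h2
  simpa using h2

lemma rep_cons_inj {p q a b : ℕ} {s t : List ℕ} (ha : a ≠ 0) (hb : b ≠ 0)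
    (h : List.replicate p 0 ++ a :: s = List.replicate q 0 ++ b :: t) :
    p = q ∧ a = b ∧ s = t := by
  induction p generalizing q with
  | zero =>
    cases q with
    | zero => simp_all
    | succ q => rw [List.replicate_succ] at h; simp at h; simp_all
  | succ p ih =>
    cases q with
    | zero => rw [List.replicate_succ] at h; simp at h; simp_all
    | succ q =>
      rw [List.replicate_succ, List.replicate_succ] at h
      simp only [List.cons_append, List.cons.injEq] at h
      have := ih h.2
      exact ⟨by omega, this.2⟩

lemma takeWhile_rep_append (u : ℕ) (x : List ℕ) (hx : x = [] ∨ x.headI ≠ 0) :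
    (List.replicate u 0 ++ x).takeWhile (· == 0) = List.replicate u 0 ∧
    (List.replicate u 0 ++ x).dropWhile (· == 0) = x := by
  induction u with
  | zero =>
    simp only [List.replicate_zero, List.nil_append]
    rcases hx with h | h
    · subst h; simp
    · cases x with
      | nil => simp
      | cons a t =>
        simp only [List.headI] at h
        rw [List.takeWhile_cons, List.dropWhile_cons]
        simp [h]
  | succ u ih =>
    rw [List.replicate_succ, List.cons_append, List.takeWhile_cons, List.dropWhile_cons]
    simpa using ih

lemma f_nilcase (ℓ r : ℕ) (x : List ℕ) (h : x.dropWhile (· == 0) = []) :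
    f ℓ r x = List.replicate (g ℓ r (x.takeWhile (· == 0)).length) 0 := by
  rw [f, h]

lemma f_conscase (ℓ r : ℕ) (x : List ℕ) (a : ℕ) (t : List ℕ)
    (h : x.dropWhile (· == 0) = a :: t) :
    f ℓ r x = List.replicate (g ℓ r (x.takeWhile (· == 0)).length) 0 ++ a :: f ℓ r t := by
  rw [f, h]

lemma f_cons (ℓ r : ℕ) (hℓ : 1 ≤ ℓ) (hr : 1 ≤ r) (a : ℕ) (ha : a ≠ 0) (t : List ℕ) :
    f ℓ r (a :: t) = a :: f ℓ r t := by
  have hd : (a :: t).dropWhile (· == 0) = a :: t := by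
    rw [List.dropWhile_cons]; simp [ha]
  have ht : (a :: t).takeWhile (· == 0) = [] := by
    rw [List.takeWhile_cons]; simp [ha]
  rw [f_conscase ℓ r _ a t hd, ht]
  simp [g_zero ℓ r hℓ hr]

def OutB (ℓ r : ℕ) (x z : List ℕ) : Prop :=
  ∃ c w, c ≤ r ∧ IsOutput ℓ r x w ∧ z = List.replicate (c * ℓ) 0 ++ w

lemma outB_refl (ℓ r : ℕ) (x : List ℕ) : OutB ℓ r x x :=
  ⟨0, x, Nat.zero_le _, out_refl ℓ r x, by simp⟩

lemma outB_zero_run (ℓ r u k : ℕ) (hk : k ≤ (u + 1) * r) :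
    OutB ℓ r (List.replicate u 0) (List.replicate (u + k * ℓ) 0) := by
  have hur : (u + 1) * r = u * r + r := by ring
  refine ⟨min k r, List.replicate (u + (k - min k r) * ℓ) 0, min_le_right _ _,
    out_zero_run ℓ r u _ (by omega), ?_⟩
  rw [← List.replicate_add]
  congr 1
  have : min k r * ℓ + (k - min k r) * ℓ = k * ℓ := by rw [← Nat.add_mul]; congr 1; omega
  omega

lemma outB_run (ℓ r u k a c : ℕ) (x w : List ℕ) (hk : k ≤ (u + 1) * r) (hc : c ≤ r)
    (hw : IsOutput ℓ r x w) :
    OutB ℓ r (List.replicate u 0 ++ a :: x)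
      (List.replicate (u + k * ℓ) 0 ++ a :: (List.replicate (c * ℓ) 0 ++ w)) := by
  have hur : (u + 1) * r = u * r + r := by ring
  refine ⟨min k r,
    List.replicate (u + (k - min k r) * ℓ) 0 ++ (a :: (List.replicate (c * ℓ) 0 ++ w)),
    min_le_right _ _,
    out_append (out_zero_run ℓ r u _ (by omega)) (IsOutput.cons a c hc hw), ?_⟩
  rw [← List.append_assoc, ← List.replicate_add]
  congr 2
  have : min k r * ℓ + (k - min k r) * ℓ = k * ℓ := by rw [← Nat.add_mul]; congr 1; omega
  omega

lemma zero_zero (ℓ r u v : ℕ) (hℓ : 1 ≤ ℓ) (hr : 1 ≤ r) (hg : g ℓ r u = g ℓ r v)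
    (huv : u ≤ v) :
    ∃ z, OutB ℓ r (List.replicate u 0) z ∧ OutB ℓ r (List.replicate v 0) z := by
  obtain ⟨k, hk, hv⟩ := run_gap ℓ r u v hℓ hr hg huv
  exact ⟨List.replicate v 0, hv ▸ outB_zero_run ℓ r u k hk, outB_refl ℓ r _⟩

lemma cons_cons (ℓ r u v a : ℕ) (xt yt z₀ : List ℕ) (hℓ : 1 ≤ ℓ) (hr : 1 ≤ r)
    (hg : g ℓ r u = g ℓ r v) (huv : u ≤ v)
    (h1 : OutB ℓ r xt z₀) (h2 : OutB ℓ r yt z₀) :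
    ∃ z, OutB ℓ r (List.replicate u 0 ++ a :: xt) z ∧
      OutB ℓ r (List.replicate v 0 ++ a :: yt) z := by
  obtain ⟨k, hk, hv⟩ := run_gap ℓ r u v hℓ hr hg huv
  obtain ⟨c, w, hc, hw, hz⟩ := h1
  obtain ⟨d, w', hd, hw', hz'⟩ := h2
  refine ⟨List.replicate v 0 ++ a :: z₀, ?_, ?_⟩
  · have := outB_run ℓ r u k a c xt w hk hc hw
    rwa [← hv, ← hz] at this
  · have := outB_run ℓ r v 0 a d yt w' (Nat.zero_le _) hd hw'
    simpa [← hz'] using this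

lemma mainB (ℓ r : ℕ) (hℓ : 1 ≤ ℓ) (hr : 1 ≤ r) :
    ∀ n : ℕ, ∀ x y : List ℕ, x.length = n → f ℓ r x = f ℓ r y →
      ∃ z, OutB ℓ r x z ∧ OutB ℓ r y z := by
  intro n
  induction n using Nat.strong_induction_on with
  | _ n ih =>
    intro x y hlen hf
    have hx : List.replicate (x.takeWhile (· == 0)).length 0 ++ x.dropWhile (· == 0) = x := by
      conv_rhs => rw [← List.takeWhile_append_dropWhile (p := (· == 0)) (l := x)]
      rw [← takeWhile_eq_rep]
    have hy : List.replicate (y.takeWhile (· == 0)).length 0 ++ y.dropWhile (· == 0) = y := by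
      conv_rhs => rw [← List.takeWhile_append_dropWhile (p := (· == 0)) (l := y)]
      rw [← takeWhile_eq_rep]
    set u := (x.takeWhile (· == 0)).length with hu
    set v := (y.takeWhile (· == 0)).length with hv
    cases hdx : x.dropWhile (· == 0) with
    | nil =>
      cases hdy : y.dropWhile (· == 0) with
      | nil =>
        rw [f_nilcase ℓ r x hdx, f_nilcase ℓ r y hdy] at hf
        have hguv : g ℓ r u = g ℓ r v := by
          have := congrArg List.length hf; simpa using this
        rw [hdx] at hx; rw [hdy] at hy
        simp only [List.append_nil] at hx hy
        rcases le_total u v with h | h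
        · obtain ⟨z, h1, h2⟩ := zero_zero ℓ r u v hℓ hr hguv h
          exact ⟨z, hx ▸ h1, hy ▸ h2⟩
        · obtain ⟨z, h1, h2⟩ := zero_zero ℓ r v u hℓ hr hguv.symm h
          exact ⟨z, hx ▸ h2, hy ▸ h1⟩
      | cons b yt =>
        exfalso
        have hb := dropWhile_head_ne y b yt hdy
        rw [f_nilcase ℓ r x hdx, f_conscase ℓ r y b yt hdy] at hf
        have : b ∈ List.replicate (g ℓ r u) 0 := by
          rw [hf]; simp
        rw [List.mem_replicate] at this
        exact hb this.2
    | cons a xt =>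
      cases hdy : y.dropWhile (· == 0) with
      | nil =>
        exfalso
        have ha := dropWhile_head_ne x a xt hdx
        rw [f_conscase ℓ r x a xt hdx, f_nilcase ℓ r y hdy] at hf
        have : a ∈ List.replicate (g ℓ r v) 0 := by
          rw [← hf]; simp
        rw [List.mem_replicate] at this
        exact ha this.2
      | cons b yt =>
        have ha := dropWhile_head_ne x a xt hdx
        have hb := dropWhile_head_ne y b yt hdy
        rw [f_conscase ℓ r x a xt hdx, f_conscase ℓ r y b yt hdy] at hf
        obtain ⟨hguv', hab, hft⟩ := rep_cons_inj ha hb hf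
        rw [hdx] at hx; rw [hdy] at hy
        have hxtlen : xt.length < n := by
          rw [← hlen, ← hx]; simp; omega
        obtain ⟨z₀, h1, h2⟩ := ih xt.length hxtlen xt yt rfl hft
        subst hab
        rcases le_total u v with h | h
        · obtain ⟨z, hz1, hz2⟩ := cons_cons ℓ r u v a xt yt z₀ hℓ hr hguv' h h1 h2
          exact ⟨z, hx ▸ hz1, hy ▸ hz2⟩
        · obtain ⟨z, hz1, hz2⟩ := cons_cons ℓ r v u a yt xt z₀ hℓ hr hguv'.symm h h2 h1
          exact ⟨z, hx ▸ hz2, hy ▸ hz1⟩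

lemma conf_of_feq (ℓ r : ℕ) (hℓ : 1 ≤ ℓ) (hr : 1 ≤ r) (x y : List ℕ)
    (hx : x ≠ []) (hxh : x.headI ≠ 0) (hy : y ≠ []) (hyh : y.headI ≠ 0)
    (hfe : f ℓ r x = f ℓ r y) : Confusable ℓ r x y := by
  cases x with
  | nil => exact absurd rfl hx
  | cons a xt =>
    cases y with
    | nil => exact absurd rfl hy
    | cons b yt =>
      simp only [List.headI] at hxh hyh
      rw [f_cons ℓ r hℓ hr a hxh xt, f_cons ℓ r hℓ hr b hyh yt] at hfe
      obtain ⟨hab, hft⟩ := List.cons.injEq .. ▸ hfe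
      injection hfe with hab hft
      subst hab
      obtain ⟨z₀, h1, h2⟩ := mainB ℓ r hℓ hr xt.length xt yt rfl hft
      obtain ⟨c, w, hc, hw, hz⟩ := h1
      obtain ⟨d, w', hd, hw', hz'⟩ := h2
      refine ⟨a :: z₀, ?_, ?_⟩
      · rw [hz]; exact IsOutput.cons a c hc hw
      · rw [hz']; exact IsOutput.cons a d hd hw'

lemma f_length (ℓ r : ℕ) (hℓ : 1 ≤ ℓ) (hr : 1 ≤ r) :
    ∀ n : ℕ, ∀ x : List ℕ, x.length = n → (f ℓ r x).length ≤ x.length := by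
  intro n
  induction n using Nat.strong_induction_on with
  | _ n ih =>
    intro x hlen
    have hx : List.replicate (x.takeWhile (· == 0)).length 0 ++ x.dropWhile (· == 0) = x := by
      conv_rhs => rw [← List.takeWhile_append_dropWhile (p := (· == 0)) (l := x)]
      rw [← takeWhile_eq_rep]
    set u := (x.takeWhile (· == 0)).length with hu
    have hgu : g ℓ r u ≤ u := (g_spec ℓ r u hℓ hr).2.1
    cases hdx : x.dropWhile (· == 0) with
    | nil =>
      rw [f_nilcase ℓ r x hdx]
      rw [hdx] at hx
      have : x.length = u := by rw [← hx]; simp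
      simp [this, hgu]
      exact hgu
    | cons a t =>
      rw [f_conscase ℓ r x a t hdx]
      rw [hdx] at hx
      have hxl : x.length = u + (t.length + 1) := by rw [← hx]; simp
      have htl : t.length < n := by omega
      have h2 := ih t.length htl t rfl
      simp only [List.length_append, List.length_replicate, List.length_cons, ← hu]
      omega

lemma f_mem (ℓ r : ℕ) (hℓ : 1 ≤ ℓ) (hr : 1 ≤ r) :
    ∀ n : ℕ, ∀ x : List ℕ, x.length = n → ∀ a ∈ f ℓ r x, a = 0 ∨ a ∈ x := by
  intro n
  induction n using Nat.strong_induction_on with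
  | _ n ih =>
    intro x hlen a ha
    cases hdx : x.dropWhile (· == 0) with
    | nil =>
      rw [f_nilcase ℓ r x hdx] at ha
      left; exact (List.mem_replicate.mp ha).2
    | cons b t =>
      rw [f_conscase ℓ r x b t hdx] at ha
      have hsub : List.Sublist (b :: t) x := hdx ▸ List.dropWhile_sublist (l := x) (· == 0)
      have hlt : t.length < n := by
        have := hsub.length_le
        simp only [List.length_cons] at this
        omega
      simp only [List.mem_append, List.mem_cons, List.mem_replicate] at ha
      rcases ha with h | h | h
      · left; exact h.2
      · right; subst h; exact hsub.mem (by simp)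
      · rcases ih t.length hlt t rfl a h with h' | h'
        · left; exact h'
        · right; exact hsub.mem (by simp [h'])

lemma f_blocks (q ℓ r : ℕ) (hq : 2 ≤ q) (hℓ : 1 ≤ ℓ) (hr : 1 ≤ r) :
    ∀ n : ℕ, ∀ x : List ℕ, x.length = n → x ≠ [] → x.headI ≠ 0 →
      (∀ a ∈ x, a < q) →
      ∃ bs : List (List ℕ), (∀ b ∈ bs, b ∈ B q ℓ r) ∧ f ℓ r x = bs.flatten := by
  intro n
  induction n using Nat.strong_induction_on with
  | _ n ih =>
    intro x hlen hne hhead hmem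
    cases x with
    | nil => exact absurd rfl hne
    | cons a x₀ =>
      simp only [List.headI] at hhead
      have haq : a < q := hmem a (by simp)
      rw [f_cons ℓ r hℓ hr a hhead x₀]
      set u := (x₀.takeWhile (· == 0)).length with hu
      have hgu := g_spec ℓ r u hℓ hr
      obtain ⟨⟨i, j, hi1, hi2, hgL⟩, _, _, _⟩ := hgu
      have hblockB : block a (g ℓ r u) ∈ B q ℓ r :=
        ⟨a, i, j, by omega, by omega, hi1, hi2, by rw [hgL]⟩
      cases hdx : x₀.dropWhile (· == 0) with
      | nil =>
        rw [f_nilcase ℓ r x₀ hdx]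
        refine ⟨[block a (g ℓ r u)], ?_, ?_⟩
        · intro b hb; simp at hb; subst hb; exact hblockB
        · simp [block]
          rfl
      | cons b t =>
        rw [f_conscase ℓ r x₀ b t hdx]
        have hb0 := dropWhile_head_ne x₀ b t hdx
        have hsub : List.Sublist (b :: t) x₀ := hdx ▸ List.dropWhile_sublist (l := x₀) (· == 0)
        have hlt : (b :: t).length < n := by
          have h1 := hsub.length_le
          simp only [List.length_cons] at h1 hlen ⊢
          omega
        have hmem' : ∀ c ∈ b :: t, c < q := fun c hc => hmem c (by
          exact List.mem_cons_of_mem a (hsub.mem hc))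
        obtain ⟨bs₁, hbs₁, hfbt⟩ := ih (b :: t).length hlt (b :: t) rfl (by simp)
          (by simp [hb0]) hmem'
        rw [f_cons ℓ r hℓ hr b hb0 t] at hfbt
        refine ⟨block a (g ℓ r u) :: bs₁, ?_, ?_⟩
        · intro c hc
          rcases List.mem_cons.mp hc with h | h
          · subst h; exact hblockB
          · exact hbs₁ c h
        · simp only [List.flatten_cons, block, ← hfbt]
          simp
          rfl

/-- for every zero-error code `Code ⊆ S q n` for the (ℓ,r)-0-insertion
channel, `f` is injective on `Code` and `f '' Code ⊆ C q ℓ r n`; in particular `f`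
maps `Code` bijectively onto a subcode of `C q ℓ r n` of the same cardinality. -/
theorem stmt9 (q ℓ r n : ℕ) (hq : 2 ≤ q) (hℓ : 1 ≤ ℓ) (hr : 1 ≤ r)
    (Code : Set (List ℕ)) (hsub : Code ⊆ S q n) (hze : ZeroErrorCode ℓ r Code) :
    Set.InjOn (f ℓ r) Code ∧ f ℓ r '' Code ⊆ C q ℓ r n ∧
      (f ℓ r '' Code).ncard = Code.ncard := by
  have hinj : Set.InjOn (f ℓ r) Code := by
    intro x hx y hy hfe
    by_contra hne
    obtain ⟨hx1, hx2, hx3, hx4⟩ := hsub hx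
    obtain ⟨hy1, hy2, hy3, hy4⟩ := hsub hy
    exact hze x hx y hy hne (conf_of_feq ℓ r hℓ hr x y hx1 hx4 hy1 hy4 hfe)
  refine ⟨hinj, ?_, Set.ncard_image_of_injOn hinj⟩
  rintro _ ⟨x, hx, rfl⟩
  obtain ⟨hx1, hx2, hx3, hx4⟩ := hsub hx
  obtain ⟨bs, hbs, hflat⟩ := f_blocks q ℓ r hq hℓ hr x.length x rfl hx1 hx4 hx3
  obtain ⟨a, t, rfl⟩ := List.exists_cons_of_ne_nil hx1
  simp only [List.headI] at hx4
  have hfx : f ℓ r (a :: t) = a :: f ℓ r t := f_cons ℓ r hℓ hr a hx4 t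
  refine ⟨⟨?_, ?_, ?_, ?_⟩, bs, hbs, hflat⟩
  · rw [hfx]; exact List.cons_ne_nil _ _
  · exact le_trans (f_length ℓ r hℓ hr _ _ rfl) hx2
  · intro c hc
    rcases f_mem ℓ r hℓ hr _ _ rfl c hc with h | h
    · omega
    · exact hx3 c h
  · rw [hfx]; simpa using hx4
end ZeroErrorDup
end

section
/- The equation v_{q,ℓ,r}(x) = 1 has exactly one solution ρ in the interval (0,1) (and the series defining v_{q,ℓ,r} converges there); moreover this solution satisfies 1/q ≤ ρ ≤ 1/(q−1). -/
namespace ZeroErrorDup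

/-- The generating function `v_{q,ℓ,r}(x) = (q−1) Σ_{j=0}^∞ Σ_{i=1}^ℓ x^{L(i,j)+1}`. -/
noncomputable def v (q ℓ r : ℕ) (x : ℝ) : ℝ :=
  ((q : ℝ) - 1) * ∑' j : ℕ, ∑ i ∈ Finset.Icc 1 ℓ, x ^ (L ℓ r i j + 1)

/-! ### Auxiliary lemmas -/

lemma pow_rep (ℓ r j : ℕ) : ∃ k, (r * ℓ + 1) ^ j = r * k + 1 := by
  induction j with
  | zero => exact ⟨0, by ring⟩
  | succ j ih =>
    obtain ⟨k, hk⟩ := ih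
    exact ⟨r * ℓ * k + ℓ + k, by rw [pow_succ, hk]; ring⟩

/-- Exact representation of `L + 1`. -/
lemma L_rep {ℓ r : ℕ} (hr : 1 ≤ r) (i j : ℕ) (hi : 1 ≤ i) :
    ∃ m, L ℓ r i j + 1 = m ∧ (r * i + 1) * (r * ℓ + 1) ^ j = r * m + 1 ∧
      (r * ℓ + 1) ^ j ≤ m := by
  obtain ⟨k, hk⟩ := pow_rep ℓ r j
  have hik : r * k ≤ r * i * k := by
    calc r * k = r * 1 * k := by ring
      _ ≤ r * i * k := Nat.mul_le_mul_right k (Nat.mul_le_mul_left r hi)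
  refine ⟨r * i * k + i + k, ?_, by rw [hk]; ring, by rw [hk]; omega⟩
  have hA : (r * i + 1) * (r * ℓ + 1) ^ j = r * (r * i * k + i + k) + 1 := by
    rw [hk]; ring
  have hm1 : 1 ≤ r * i * k + i + k := by omega
  unfold L
  rw [hA]
  have : r * (r * i * k + i + k) + 1 - 1 = r * (r * i * k + i + k) := by omega
  rw [this, Nat.mul_div_cancel_left _ (by omega : 0 < r)]
  omega

lemma L_exp_ge {ℓ r : ℕ} (hℓ : 1 ≤ ℓ) (hr : 1 ≤ r) (i j : ℕ) (hi : 1 ≤ i) :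
    j + 1 ≤ L ℓ r i j + 1 := by
  obtain ⟨m, hm, _, hge⟩ := L_rep (ℓ := ℓ) hr i j hi
  have h2 : 2 ^ j ≤ (r * ℓ + 1) ^ j := Nat.pow_le_pow_left (by nlinarith) j
  have hj : j < 2 ^ j := Nat.lt_two_pow_self
  omega

lemma L_one_zero {ℓ r : ℕ} (hr : 1 ≤ r) : L ℓ r 1 0 + 1 = 1 := by
  obtain ⟨m, hm, hA, hge⟩ := L_rep (ℓ := ℓ) hr 1 0 le_rfl
  simp only [pow_zero, mul_one] at hA hge
  have h1 : r * 1 = r * m := by omega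
  have h2 : 1 = m := Nat.eq_of_mul_eq_mul_left (by omega) h1
  omega

/-- Injectivity of the exponents. -/
lemma L_inj {ℓ r : ℕ} (hℓ : 1 ≤ ℓ) (hr : 1 ≤ r) {i j i' j' : ℕ}
    (hi : 1 ≤ i) (hi' : 1 ≤ i') (hiℓ : i ≤ ℓ) (hi'ℓ : i' ≤ ℓ)
    (h : L ℓ r i j + 1 = L ℓ r i' j' + 1) : j = j' ∧ i = i' := by
  obtain ⟨m, hm, hA, _⟩ := L_rep (ℓ := ℓ) hr i j hi
  obtain ⟨m', hm', hA', _⟩ := L_rep (ℓ := ℓ) hr i' j' hi'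
  have hmm : m = m' := by omega
  have hAA : (r * i + 1) * (r * ℓ + 1) ^ j = (r * i' + 1) * (r * ℓ + 1) ^ j' := by
    rw [hA, hA', hmm]
  -- first show j = j'
  have key : ∀ a b a' b' : ℕ, 1 ≤ a → a ≤ ℓ → 1 ≤ a' → b < b' →
      (r * a + 1) * (r * ℓ + 1) ^ b < (r * a' + 1) * (r * ℓ + 1) ^ b' := by
    intro a b a' b' ha haℓ ha' hbb
    have h1 : (r * a + 1) * (r * ℓ + 1) ^ b ≤ (r * ℓ + 1) * (r * ℓ + 1) ^ b := by
      have haa : r * a ≤ r * ℓ := Nat.mul_le_mul_left r haℓ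
      exact Nat.mul_le_mul_right _ (by omega)
    have h2 : (r * ℓ + 1) * (r * ℓ + 1) ^ b = (r * ℓ + 1) ^ (b + 1) := by
      rw [pow_succ]; ring
    have h3 : (r * ℓ + 1) ^ (b + 1) ≤ (r * ℓ + 1) ^ b' :=
      Nat.pow_le_pow_right (by omega) (by omega)
    have h4 : (r * ℓ + 1) ^ b' < (r * a' + 1) * (r * ℓ + 1) ^ b' := by
      have : 0 < (r * ℓ + 1) ^ b' := Nat.pow_pos (by omega)
      have h5 : 0 < r * a' := Nat.mul_pos (by omega) (by omega)
      calc (r * ℓ + 1) ^ b' = 1 * (r * ℓ + 1) ^ b' := (one_mul _).symm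
        _ < (r * a' + 1) * (r * ℓ + 1) ^ b' :=
            mul_lt_mul_of_pos_right (by omega) this
    omega
  have hjj : j = j' := by
    rcases lt_trichotomy j j' with h' | h' | h'
    · exact absurd hAA (Nat.ne_of_lt (key i j i' j' hi hiℓ hi' h'))
    · exact h'
    · exact absurd hAA.symm (Nat.ne_of_lt (key i' j' i j hi' hi'ℓ hi h'))
  subst hjj
  constructor
  · rfl
  · have hp : 0 < (r * ℓ + 1) ^ j := Nat.pow_pos (by omega)
    have := Nat.eq_of_mul_eq_mul_right hp hAA
    have : r * i = r * i' := by omega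
    exact Nat.eq_of_mul_eq_mul_left (by omega) this

/-- Summability of the series. -/
lemma v_summable {ℓ r : ℕ} (hℓ : 1 ≤ ℓ) (hr : 1 ≤ r) {x : ℝ} (hx0 : 0 ≤ x) (hx1 : x < 1) :
    Summable (fun j : ℕ => ∑ i ∈ Finset.Icc 1 ℓ, x ^ (L ℓ r i j + 1)) := by
  have hsum : Summable (fun j : ℕ => (ℓ : ℝ) * (x * x ^ j)) :=
    ((summable_geometric_of_lt_one hx0 hx1).mul_left x).mul_left _
  apply Summable.of_nonneg_of_le _ _ hsum
  · intro j
    exact Finset.sum_nonneg fun i _ => pow_nonneg hx0 _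
  · intro j
    calc ∑ i ∈ Finset.Icc 1 ℓ, x ^ (L ℓ r i j + 1)
        ≤ ∑ i ∈ Finset.Icc 1 ℓ, x ^ (j + 1) := by
          apply Finset.sum_le_sum
          intro i hi
          simp only [Finset.mem_Icc] at hi
          exact pow_le_pow_of_le_one hx0 hx1.le (L_exp_ge hℓ hr i j hi.1)
      _ = (ℓ : ℝ) * (x * x ^ j) := by
          rw [Finset.sum_const, Nat.card_Icc]
          simp only [Nat.add_sub_cancel, nsmul_eq_mul]
          ring
  
/-- Continuity of `v` on `[0, c]` for `c < 1`. -/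
lemma v_continuousOn (q ℓ r : ℕ) (hℓ : 1 ≤ ℓ) (hr : 1 ≤ r) {c : ℝ} (hc0 : 0 ≤ c)
    (hc1 : c < 1) : ContinuousOn (v q ℓ r) (Set.Icc 0 c) := by
  unfold v
  apply ContinuousOn.mul continuousOn_const
  apply continuousOn_tsum (u := fun j : ℕ => (ℓ : ℝ) * (c * c ^ j))
  · intro j
    exact (continuous_finset_sum _ fun i _ => continuous_pow _).continuousOn
  · exact ((summable_geometric_of_lt_one hc0 hc1).mul_left c).mul_left _
  · intro j x hx
    obtain ⟨hx0, hxc⟩ := hx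
    have h1 : ∀ i ∈ Finset.Icc 1 ℓ, (0:ℝ) ≤ x ^ (L ℓ r i j + 1) :=
      fun i _ => pow_nonneg hx0 _
    rw [Real.norm_eq_abs, abs_of_nonneg (Finset.sum_nonneg h1)]
    calc ∑ i ∈ Finset.Icc 1 ℓ, x ^ (L ℓ r i j + 1)
        ≤ ∑ i ∈ Finset.Icc 1 ℓ, c ^ (j + 1) := by
          apply Finset.sum_le_sum
          intro i hi
          simp only [Finset.mem_Icc] at hi
          calc x ^ (L ℓ r i j + 1) ≤ c ^ (L ℓ r i j + 1) := pow_le_pow_left₀ hx0 hxc _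
            _ ≤ c ^ (j + 1) :=
              pow_le_pow_of_le_one hc0 hc1.le (L_exp_ge hℓ hr i j hi.1)
      _ = (ℓ : ℝ) * (c * c ^ j) := by
          rw [Finset.sum_const, Nat.card_Icc]
          simp only [Nat.add_sub_cancel, nsmul_eq_mul]
          ring

/-- Strict monotonicity of `v` on `[0, 1)`. -/
lemma v_strictMonoOn (q ℓ r : ℕ) (hq : 2 ≤ q) (hℓ : 1 ≤ ℓ) (hr : 1 ≤ r) :
    StrictMonoOn (v q ℓ r) (Set.Ico 0 1) := by
  intro x hx y hy hxy
  obtain ⟨hx0, hx1⟩ := hx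
  obtain ⟨hy0, hy1⟩ := hy
  unfold v
  have hq1 : (0:ℝ) < (q : ℝ) - 1 := by
    have : (2:ℝ) ≤ (q:ℝ) := by exact_mod_cast hq
    linarith
  apply mul_lt_mul_of_pos_left _ hq1
  apply Summable.tsum_lt_tsum_of_nonneg (i := 0)
  · intro j
    exact Finset.sum_nonneg fun i _ => pow_nonneg hx0 _
  · intro j
    exact Finset.sum_le_sum fun i _ => pow_le_pow_left₀ hx0 hxy.le _
  · apply Finset.sum_lt_sum_of_nonempty
    · exact ⟨1, by simp [Finset.mem_Icc]; omega⟩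
    · intro i _
      exact pow_lt_pow_left₀ hxy hx0 (Nat.succ_ne_zero _)
  · exact v_summable hℓ hr hy0 hy1

/-- Geometric upper bound: `v x ≤ (q-1) x / (1-x)`. -/
lemma v_le_geom (q ℓ r : ℕ) (hq : 2 ≤ q) (hℓ : 1 ≤ ℓ) (hr : 1 ≤ r) {x : ℝ}
    (hx0 : 0 ≤ x) (hx1 : x < 1) :
    v q ℓ r x ≤ ((q : ℝ) - 1) * (x / (1 - x)) := by
  unfold v
  have hq1 : (0:ℝ) ≤ (q : ℝ) - 1 := by
    have : (2:ℝ) ≤ (q:ℝ) := by exact_mod_cast hq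
    linarith
  apply mul_le_mul_of_nonneg_left _ hq1
  have hgeom : Summable (fun m : ℕ => x * x ^ m) :=
    (summable_geometric_of_lt_one hx0 hx1).mul_left x
  have htsum : ∑' m : ℕ, x * x ^ m = x / (1 - x) := by
    rw [tsum_mul_left, tsum_geometric_of_lt_one hx0 hx1, div_eq_mul_inv]
  rw [← htsum]
  apply Summable.tsum_le_of_sum_le (v_summable hℓ hr hx0 hx1)
  intro s
  -- rewrite the double sum as a sum over a product finset
  rw [← Finset.sum_product']
  set t := s ×ˢ Finset.Icc 1 ℓ with ht
  have hinj : ∀ p ∈ t, ∀ p' ∈ t,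
      (fun p : ℕ × ℕ => L ℓ r p.2 p.1 + 1) p = (fun p : ℕ × ℕ => L ℓ r p.2 p.1 + 1) p' →
      p = p' := by
    intro p hp p' hp' hpe
    simp only [ht, Finset.mem_product, Finset.mem_Icc] at hp hp'
    obtain ⟨hj, hi⟩ := L_inj hℓ hr hp.2.1 hp'.2.1 hp.2.2 hp'.2.2 hpe
    exact Prod.ext hj hi
  have himg := Finset.sum_image (s := t) (f := fun n : ℕ => x ^ n)
    (g := fun p : ℕ × ℕ => L ℓ r p.2 p.1 + 1) hinj
  rw [← himg]
  set u := t.image (fun p : ℕ × ℕ => L ℓ r p.2 p.1 + 1) with hu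
  have hu1 : ∀ n ∈ u, 1 ≤ n := by
    intro n hn
    simp only [hu, Finset.mem_image] at hn
    obtain ⟨p, _, hp⟩ := hn
    omega
  have hinj2 : ∀ n ∈ u, ∀ n' ∈ u, n - 1 = n' - 1 → n = n' := by
    intro n hn n' hn' h
    have := hu1 n hn
    have := hu1 n' hn'
    omega
  have himg2 := Finset.sum_image (s := u) (f := fun m : ℕ => x * x ^ m)
    (g := fun n : ℕ => n - 1) hinj2
  have heqsum : ∑ n ∈ u, x ^ n = ∑ m ∈ u.image (fun n => n - 1), x * x ^ m := by
    rw [himg2]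
    apply Finset.sum_congr rfl
    intro n hn
    have h1 := hu1 n hn
    show x ^ n = x * x ^ (n - 1)
    rw [← pow_succ']
    congr 1
    omega
  rw [heqsum]
  apply Summable.sum_le_tsum
  · intro m _
    exact mul_nonneg hx0 (pow_nonneg hx0 _)
  · exact hgeom

/-- Lower bound by the single first term. -/
lemma v_ge_first (q ℓ r : ℕ) (hq : 2 ≤ q) (hℓ : 1 ≤ ℓ) (hr : 1 ≤ r) {x : ℝ}
    (hx0 : 0 ≤ x) (hx1 : x < 1) : ((q : ℝ) - 1) * x ≤ v q ℓ r x := by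
  unfold v
  have hq1 : (0:ℝ) ≤ (q : ℝ) - 1 := by
    have : (2:ℝ) ≤ (q:ℝ) := by exact_mod_cast hq
    linarith
  apply mul_le_mul_of_nonneg_left _ hq1
  have h0 : x ^ (L ℓ r 1 0 + 1) ≤ ∑ i ∈ Finset.Icc 1 ℓ, x ^ (L ℓ r i 0 + 1) := by
    apply Finset.single_le_sum (f := fun i => x ^ (L ℓ r i 0 + 1))
    · intro i _; exact pow_nonneg hx0 _
    · simp [Finset.mem_Icc]; omega
  have h1 : ∑ i ∈ Finset.Icc 1 ℓ, x ^ (L ℓ r i 0 + 1) ≤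
      ∑' j : ℕ, ∑ i ∈ Finset.Icc 1 ℓ, x ^ (L ℓ r i j + 1) := by
    apply Summable.le_tsum (v_summable hℓ hr hx0 hx1) 0
    intro j _
    exact Finset.sum_nonneg fun i _ => pow_nonneg hx0 _
  rw [L_one_zero hr, pow_one] at h0
  linarith

/-- Lower bound by two terms. -/
lemma v_ge_two (q ℓ r : ℕ) (hq : 2 ≤ q) (hℓ : 1 ≤ ℓ) (hr : 1 ≤ r) {x : ℝ}
    (hx0 : 0 ≤ x) (hx1 : x < 1) :
    x + x ^ (L ℓ r 1 1 + 1) ≤ v q ℓ r x := by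
  unfold v
  have hq1 : (1:ℝ) ≤ (q : ℝ) - 1 := by
    have : (2:ℝ) ≤ (q:ℝ) := by exact_mod_cast hq
    linarith
  have hterm : ∀ j, x ^ (L ℓ r 1 j + 1) ≤ ∑ i ∈ Finset.Icc 1 ℓ, x ^ (L ℓ r i j + 1) := by
    intro j
    apply Finset.single_le_sum (f := fun i => x ^ (L ℓ r i j + 1))
    · intro i _; exact pow_nonneg hx0 _
    · simp [Finset.mem_Icc]; omega
  have hT : x + x ^ (L ℓ r 1 1 + 1) ≤
      ∑' j : ℕ, ∑ i ∈ Finset.Icc 1 ℓ, x ^ (L ℓ r i j + 1) := by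
    have hs : ∑ j ∈ ({0, 1} : Finset ℕ), ∑ i ∈ Finset.Icc 1 ℓ, x ^ (L ℓ r i j + 1) ≤
        ∑' j : ℕ, ∑ i ∈ Finset.Icc 1 ℓ, x ^ (L ℓ r i j + 1) := by
      apply Summable.sum_le_tsum
      · intro j _
        exact Finset.sum_nonneg fun i _ => pow_nonneg hx0 _
      · exact v_summable hℓ hr hx0 hx1
    have h01 : ∑ j ∈ ({0, 1} : Finset ℕ), ∑ i ∈ Finset.Icc 1 ℓ, x ^ (L ℓ r i j + 1) =
        (∑ i ∈ Finset.Icc 1 ℓ, x ^ (L ℓ r i 0 + 1)) +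
        (∑ i ∈ Finset.Icc 1 ℓ, x ^ (L ℓ r i 1 + 1)) := by
      rw [Finset.sum_insert (by simp), Finset.sum_singleton]
    have h0 := hterm 0
    have h1 := hterm 1
    rw [L_one_zero hr, pow_one] at h0
    rw [h01] at hs
    linarith
  have hTnn : (0:ℝ) ≤ x + x ^ (L ℓ r 1 1 + 1) := by positivity
  calc x + x ^ (L ℓ r 1 1 + 1) = 1 * (x + x ^ (L ℓ r 1 1 + 1)) := (one_mul _).symm
    _ ≤ ((q : ℝ) - 1) * (∑' j : ℕ, ∑ i ∈ Finset.Icc 1 ℓ, x ^ (L ℓ r i j + 1)) := by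
        apply mul_le_mul hq1 hT hTnn (by linarith)

/-- the series defining `v_{q,ℓ,r}` converges on `[0,1)`, the equation
`v_{q,ℓ,r}(x) = 1` has exactly one solution `ρ` in `(0,1)`, and this solution satisfies
`1/q ≤ ρ ≤ 1/(q−1)`. -/
theorem stmt12 (q ℓ r : ℕ) (hq : 2 ≤ q) (hℓ : 1 ≤ ℓ) (hr : 1 ≤ r) :
    (∀ x : ℝ, 0 ≤ x → x < 1 →
      Summable (fun j : ℕ => ∑ i ∈ Finset.Icc 1 ℓ, x ^ (L ℓ r i j + 1))) ∧
    (∃! ρ : ℝ, ρ ∈ Set.Ioo (0 : ℝ) 1 ∧ v q ℓ r ρ = 1) ∧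
    (∀ ρ ∈ Set.Ioo (0 : ℝ) 1, v q ℓ r ρ = 1 →
      1 / (q : ℝ) ≤ ρ ∧ ρ ≤ 1 / ((q : ℝ) - 1)) := by
  have hq2 : (2:ℝ) ≤ (q:ℝ) := by exact_mod_cast hq
  have hq1 : (0:ℝ) < (q:ℝ) - 1 := by linarith
  -- the point a = 1/q
  set a : ℝ := 1 / (q:ℝ) with ha_def
  have ha0 : 0 < a := by positivity
  have ha2 : a ≤ 1 / 2 := by
    rw [ha_def]
    apply div_le_div_of_nonneg_left one_pos.le (by norm_num) hq2
  have ha1 : a < 1 := by linarith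
  have hva : v q ℓ r a ≤ 1 := by
    have := v_le_geom q ℓ r hq hℓ hr ha0.le ha1
    have heq : ((q:ℝ) - 1) * (a / (1 - a)) = 1 := by
      have hqne : (q:ℝ) ≠ 0 := by linarith
      have hne : (q:ℝ) - 1 ≠ 0 := ne_of_gt hq1
      have h1a : 1 - a = ((q:ℝ) - 1) / (q:ℝ) := by rw [ha_def]; field_simp
      rw [ha_def, h1a]
      field_simp
    linarith
  -- the point b with v b ≥ 1
  set M : ℕ := L ℓ r 1 1 + 1 with hM_def
  have hM1 : 1 ≤ M := by omega
  have hMne : (M:ℝ) ≠ 0 := by exact_mod_cast Nat.one_le_iff_ne_zero.mp hM1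
  set b : ℝ := (1/2 : ℝ) ^ ((M:ℝ)⁻¹) with hb_def
  have hb0 : 0 < b := Real.rpow_pos_of_pos (by norm_num) _
  have hb1 : b < 1 := by
    apply Real.rpow_lt_one (by norm_num) (by norm_num)
    positivity
  have hbM : b ^ M = 1/2 := by
    rw [hb_def, ← Real.rpow_natCast ((1/2:ℝ) ^ ((M:ℝ)⁻¹)) M, ← Real.rpow_mul (by norm_num),
      inv_mul_cancel₀ hMne, Real.rpow_one]
  have hvb : 1 ≤ v q ℓ r b := by
    have h2 := v_ge_two q ℓ r hq hℓ hr hb0.le hb1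
    have hbb : b ^ M ≤ b := by
      calc b ^ M ≤ b ^ 1 := pow_le_pow_of_le_one hb0.le hb1.le hM1
        _ = b := pow_one b
    rw [← hM_def] at h2
    rw [hbM] at hbb h2
    linarith
  -- c = max a b
  set c : ℝ := max a b with hc_def
  have hc0 : 0 < c := lt_max_of_lt_left ha0
  have hc1 : c < 1 := max_lt ha1 hb1
  have hac : a ≤ c := le_max_left _ _
  have hmono := v_strictMonoOn q ℓ r hq hℓ hr
  have hvc : 1 ≤ v q ℓ r c := by
    rcases le_or_gt c b with h | h
    · have : c = b := le_antisymm h (le_max_right _ _)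
      rw [this]; exact hvb
    · have := hmono ⟨hb0.le, hb1⟩ ⟨hc0.le, hc1⟩ h
      linarith
  -- IVT
  have hcont : ContinuousOn (v q ℓ r) (Set.Icc a c) := by
    apply (v_continuousOn q ℓ r hℓ hr hc0.le hc1).mono
    intro x hx
    exact ⟨le_trans ha0.le hx.1, hx.2⟩
  have hIVT := intermediate_value_Icc hac hcont
  have h1mem : (1:ℝ) ∈ Set.Icc (v q ℓ r a) (v q ℓ r c) := ⟨hva, hvc⟩
  obtain ⟨ρ, hρmem, hρeq⟩ := hIVT h1mem
  have hρIoo : ρ ∈ Set.Ioo (0:ℝ) 1 :=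
    ⟨lt_of_lt_of_le ha0 hρmem.1, lt_of_le_of_lt hρmem.2 hc1⟩
  -- uniqueness helper
  have huniq : ∀ x ∈ Set.Ioo (0:ℝ) 1, ∀ y ∈ Set.Ioo (0:ℝ) 1,
      v q ℓ r x = 1 → v q ℓ r y = 1 → x = y := by
    intro x hx y hy hvx hvy
    by_contra hne
    rcases lt_or_gt_of_ne hne with h | h
    · have := hmono ⟨hx.1.le, hx.2⟩ ⟨hy.1.le, hy.2⟩ h
      rw [hvx, hvy] at this; exact lt_irrefl 1 this
    · have := hmono ⟨hy.1.le, hy.2⟩ ⟨hx.1.le, hx.2⟩ h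
      rw [hvx, hvy] at this; exact lt_irrefl 1 this
  refine ⟨fun x hx0 hx1 => v_summable hℓ hr hx0 hx1, ⟨ρ, ⟨hρIoo, hρeq⟩, ?_⟩, ?_⟩
  · rintro y ⟨hyIoo, hvy⟩
    exact huniq y hyIoo ρ hρIoo hvy hρeq
  · rintro σ ⟨hσ0, hσ1⟩ hvσ
    constructor
    · -- 1/q ≤ σ
      by_contra hlt
      push_neg at hlt
      have := hmono ⟨hσ0.le, hσ1⟩ ⟨ha0.le, ha1⟩ hlt
      rw [hvσ] at this
      linarith
    · -- σ ≤ 1/(q-1)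
      have hge := v_ge_first q ℓ r hq hℓ hr hσ0.le hσ1
      rw [hvσ] at hge
      rw [le_div_iff₀ hq1]
      linarith

end ZeroErrorDup
end
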